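/- Let X be a real normed space, let F ⊆ X be a nonempty closed bounded convex set, and let Ω ⊆ X be a nonempty closed convex set. Then the minimal time function T^F_Ω : X → [0, ∞] is a convex function, i.e., T^F_Ω(λx + (1 − λ)y) ≤ λ T^F_Ω(x) + (1 − λ) T^F_Ω(y) for all x, y ∈ X and λ ∈ [0, 1]. -/

import Mathlib

/-- The minimal time function `T^F_Ω(x) := inf{t ≥ 0 : Ω ∩ (x + tF) ≠ ∅}`,
with values in the extended reals (`sInf ∅ = ⊤`). -/
noncomputable def minTime {X : Type*} [AddCommGroup X] [Module ℝ X]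
    (F Ω : Set X) (x : X) : EReal :=
  sInf {r : EReal | ∃ t : ℝ, 0 ≤ t ∧ r = (t : EReal) ∧ ∃ f ∈ F, x + t • f ∈ Ω}

lemma minTime_le {X : Type*} [AddCommGroup X] [Module ℝ X]
    (F Ω : Set X) (x : X) (c : ℝ) (hc : 0 ≤ c) (f : X) (hf : f ∈ F)
    (h : x + c • f ∈ Ω) : minTime F Ω x ≤ (c : EReal) :=
  sInf_le ⟨c, hc, rfl, f, hf, h⟩

lemma minTime_nonneg {X : Type*} [AddCommGroup X] [Module ℝ X]
    (F Ω : Set X) (x : X) : 0 ≤ minTime F Ω x := by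
  refine le_sInf ?_
  rintro r ⟨s, hs, rfl, -⟩
  exact_mod_cast hs

lemma minTime_key {X : Type*} [AddCommGroup X] [Module ℝ X]
    {F Ω : Set X} (hFconv : Convex ℝ F) (hΩconv : Convex ℝ Ω)
    {x y : X} {t a b : ℝ} (ht : 0 ≤ t) (ht1 : t ≤ 1) (ha : 0 ≤ a) (hb : 0 ≤ b)
    {f g : X} (hf : f ∈ F) (hg : g ∈ F)
    (hxa : x + a • f ∈ Ω) (hyb : y + b • g ∈ Ω) :
    ∃ h ∈ F, (t • x + (1 - t) • y) + (t * a + (1 - t) * b) • h ∈ Ω := by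
  have ht' : 0 ≤ 1 - t := by linarith
  have hΩz : t • (x + a • f) + (1 - t) • (y + b • g) ∈ Ω :=
    hΩconv hxa hyb ht ht' (by ring)
  have hz : t • (x + a • f) + (1 - t) • (y + b • g)
      = (t • x + (1 - t) • y) + ((t * a) • f + ((1 - t) * b) • g) := by
    simp only [smul_add, smul_smul]; abel
  rw [hz] at hΩz
  rcases eq_or_lt_of_le (by positivity : (0:ℝ) ≤ t * a + (1 - t) * b) with hc | hc
  · have h1 : t * a = 0 := by nlinarith [mul_nonneg ht ha, mul_nonneg ht' hb]
    have h2 : (1 - t) * b = 0 := by nlinarith [mul_nonneg ht ha, mul_nonneg ht' hb]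
    refine ⟨f, hf, ?_⟩
    rw [← hc]
    simpa [h1, h2] using hΩz
  · set c := t * a + (1 - t) * b with hcdef
    refine ⟨(t * a / c) • f + ((1 - t) * b / c) • g,
      hFconv hf hg (div_nonneg (mul_nonneg ht ha) hc.le)
        (div_nonneg (mul_nonneg ht' hb) hc.le) (by field_simp; exact hcdef.symm), ?_⟩
    have : c • ((t * a / c) • f + ((1 - t) * b / c) • g)
        = (t * a) • f + ((1 - t) * b) • g := by
      rw [smul_add, smul_smul, smul_smul, mul_div_cancel₀ _ hc.ne',
        mul_div_cancel₀ _ hc.ne']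
    rw [this]
    exact hΩz

/-- Convexity of the minimal time function when the target set `Ω` is convex. -/
theorem stmt_19 {X : Type*} [NormedAddCommGroup X] [NormedSpace ℝ X]
    (F Ω : Set X) (hFne : F.Nonempty) (hFcl : IsClosed F)
    (hFbd : Bornology.IsBounded F) (hFconv : Convex ℝ F)
    (hΩne : Ω.Nonempty) (hΩcl : IsClosed Ω) (hΩconv : Convex ℝ Ω) :
    ∀ x y : X, ∀ t : ℝ, 0 ≤ t → t ≤ 1 →
      minTime F Ω (t • x + (1 - t) • y) ≤
        (t : EReal) * minTime F Ω x + ((1 - t : ℝ) : EReal) * minTime F Ω y := by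
  intro x y t ht ht1
  rcases eq_or_lt_of_le ht with h0 | h0
  · simp [← h0]
  rcases eq_or_lt_of_le ht1 with h1 | h1
  · simp [h1]
  set A := minTime F Ω x with hAdef
  set B := minTime F Ω y with hBdef
  have hA0 : 0 ≤ A := minTime_nonneg F Ω x
  have hB0 : 0 ≤ B := minTime_nonneg F Ω y
  have htE : (0 : EReal) < (t : EReal) := by exact_mod_cast h0
  have ht'E : (0 : EReal) < ((1 - t : ℝ) : EReal) := by
    exact_mod_cast (by linarith : (0:ℝ) < 1 - t)
  by_cases hA : A = ⊤
  · rw [hA, EReal.mul_top_of_pos htE, EReal.top_add_of_ne_bot]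
    · exact le_top
    · exact ne_bot_of_le_ne_bot (by simp) (mul_nonneg ht'E.le hB0)
  by_cases hB : B = ⊤
  · rw [hB, EReal.mul_top_of_pos ht'E, EReal.add_top_of_ne_bot]
    · exact le_top
    · exact ne_bot_of_le_ne_bot (by simp) (mul_nonneg htE.le hA0)
  have hAbot : A ≠ ⊥ := ne_bot_of_le_ne_bot (by simp) hA0
  have hBbot : B ≠ ⊥ := ne_bot_of_le_ne_bot (by simp) hB0
  set a' := A.toReal with ha'def
  set b' := B.toReal with hb'def
  have hAcoe : A = (a' : EReal) := (EReal.coe_toReal hA hAbot).symm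
  have hBcoe : B = (b' : EReal) := (EReal.coe_toReal hB hBbot).symm
  have ha'0 : 0 ≤ a' := by rw [hAcoe] at hA0; exact_mod_cast hA0
  have hb'0 : 0 ≤ b' := by rw [hBcoe] at hB0; exact_mod_cast hB0
  rw [hAcoe, hBcoe]
  have key : ∀ ε : ℝ, 0 < ε →
      minTime F Ω (t • x + (1 - t) • y) ≤ ((t * a' + (1 - t) * b' + ε : ℝ) : EReal) := by
    intro ε hε
    -- find a ∈ S x with a < a' + ε
    have hAlt : A < ((a' + ε : ℝ) : EReal) := by
      rw [hAcoe]; exact_mod_cast (by linarith : a' < a' + ε)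
    have hBlt : B < ((b' + ε : ℝ) : EReal) := by
      rw [hBcoe]; exact_mod_cast (by linarith : b' < b' + ε)
    obtain ⟨r, hrmem, hrlt⟩ := sInf_lt_iff.mp hAlt
    obtain ⟨s, hsmem, hslt⟩ := sInf_lt_iff.mp hBlt
    obtain ⟨a, ha0, rfl, f, hf, hxa⟩ := hrmem
    obtain ⟨b, hb0, rfl, g, hg, hyb⟩ := hsmem
    have haε : a < a' + ε := by exact_mod_cast hrlt
    have hbε : b < b' + ε := by exact_mod_cast hslt
    obtain ⟨h, hh, hmem⟩ := minTime_key hFconv hΩconv ht ht1 ha0 hb0 hf hg hxa hyb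
    have h1t : (0:ℝ) ≤ 1 - t := by linarith
    have hcnn : (0:ℝ) ≤ t * a + (1 - t) * b := by positivity
    calc minTime F Ω (t • x + (1 - t) • y)
        ≤ ((t * a + (1 - t) * b : ℝ) : EReal) :=
          minTime_le F Ω _ _ hcnn h hh hmem
      _ ≤ ((t * a' + (1 - t) * b' + ε : ℝ) : EReal) := by
          apply EReal.coe_le_coe_iff.mpr
          nlinarith
  -- conclude from the epsilon bound
  set L := minTime F Ω (t • x + (1 - t) • y) with hLdef
  have hLtop : L ≠ ⊤ := by
    intro h
    have := key 1 one_pos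
    rw [h] at this
    exact (EReal.coe_lt_top _).not_ge this
  have hLbot : L ≠ ⊥ := ne_bot_of_le_ne_bot (by simp) (minTime_nonneg F Ω _)
  have hLcoe : L = (L.toReal : EReal) := (EReal.coe_toReal hLtop hLbot).symm
  rw [hLcoe]
  have hreal : L.toReal ≤ t * a' + (1 - t) * b' := by
    refine le_of_forall_pos_le_add fun ε hε => ?_
    have := key ε hε
    rw [hLcoe] at this
    exact_mod_cast this
  calc ((L.toReal : ℝ) : EReal) ≤ ((t * a' + (1 - t) * b' : ℝ) : EReal) := by
        exact_mod_cast hreal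
    _ = (t : EReal) * (a' : EReal) + ((1 - t : ℝ) : EReal) * (b' : EReal) := by
        push_cast; ring
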